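/- For h = 1,…,H let g_h : ℝ → ℝ be differentiable on a neighborhood of z and twice differentiable at z, with |g_h(z)| ≤ X, |g_h'(z)| ≤ Y, and |g_h''(z)| ≤ Z, let d_1,…,d_D ∈ ℝ with |d_k| ≤ R, let mixing coefficients α_{hk} ∈ ℝ satisfy |α_{hk}| ≤ α, let weights W_1,…,W_H ∈ ℝ satisfy |W_h| ≤ W, let b ∈ ℝ, and let γ ≥ 0, with X, Y, Z, R, α, W ≥ 0. Define G(t) = Σ_{h=1}^H W_h · ( Σ_{k=1}^D α_{hk} · exp(−γ (g_h(t) − d_k)²) ) + b. Then G is twice differentiable at z and |G''(z)| ≤ 2·H·W·D·α·γ·[ (1 + 2γ(X + R)²)·Y² + (X + R)·Z ]. -/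

import Mathlib

lemma kaf_hasDerivAt (γ c : ℝ) (g : ℝ → ℝ) (g' t : ℝ) (hg : HasDerivAt g g' t) :
    HasDerivAt (fun s => Real.exp (-γ * (g s - c) ^ 2))
      ((-2 * γ * (g t - c) * g') * Real.exp (-γ * (g t - c) ^ 2)) t := by
  have h1 : HasDerivAt (fun s => -γ * (g s - c) ^ 2)
      (-γ * (2 * (g t - c) ^ 1 * g')) t := ((hg.sub_const c).pow 2).const_mul (-γ)
  have h2 := h1.exp
  convert h2 using 1
  ring

lemma bound_aux (γ u v w e X Y Z R : ℝ) (hγ : 0 ≤ γ) (hXR : 0 ≤ X + R)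
    (hu : |u| ≤ X + R) (hv : |v| ≤ Y) (hw : |w| ≤ Z)
    (he0 : 0 ≤ e) (he1 : e ≤ 1) :
    |((-2*γ*v)*v + (-2*γ*u)*w) * e + ((-2*γ*u)*v) * ((-2*γ*u*v) * e)| ≤
      2*γ*((1+2*γ*(X+R)^2)*Y^2 + (X+R)*Z) := by
  have hu2 : u ^ 2 ≤ (X + R) ^ 2 := by nlinarith [abs_nonneg u, sq_abs u]
  have hv2 : v ^ 2 ≤ Y ^ 2 := by nlinarith [abs_nonneg v, sq_abs v]
  have huw : |u * w| ≤ (X + R) * Z := by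
    rw [abs_mul]; exact mul_le_mul hu hw (abs_nonneg w) hXR
  have h1 : ((-2*γ*v)*v + (-2*γ*u)*w) * e + ((-2*γ*u)*v) * ((-2*γ*u*v) * e)
      = e * (-(2*γ*v^2) + -(2*γ*(u*w)) + 4*γ^2*(u^2*v^2)) := by ring
  rw [h1, abs_mul, abs_of_nonneg he0]
  have htr : |(-(2*γ*v^2) + -(2*γ*(u*w)) + 4*γ^2*(u^2*v^2))| ≤
      2*γ*v^2 + 2*γ*|u*w| + 4*γ^2*(u^2*v^2) := by
    calc |(-(2*γ*v^2) + -(2*γ*(u*w)) + 4*γ^2*(u^2*v^2))|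
        ≤ |(-(2*γ*v^2) + -(2*γ*(u*w)))| + |4*γ^2*(u^2*v^2)| := abs_add_le _ _
      _ ≤ |(-(2*γ*v^2))| + |(-(2*γ*(u*w)))| + |4*γ^2*(u^2*v^2)| := by
          exact add_le_add (abs_add_le _ _) le_rfl
      _ = 2*γ*v^2 + 2*γ*|u*w| + 4*γ^2*(u^2*v^2) := by
          rw [abs_neg, abs_neg, abs_of_nonneg (show (0:ℝ) ≤ 2*γ*v^2 by positivity),
            abs_of_nonneg (show (0:ℝ) ≤ 4*γ^2*(u^2*v^2) by positivity),
            abs_mul, abs_of_nonneg (show (0:ℝ) ≤ 2*γ by positivity)]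
  have hfin : 2*γ*v^2 + 2*γ*|u*w| + 4*γ^2*(u^2*v^2) ≤
      2*γ*((1+2*γ*(X+R)^2)*Y^2 + (X+R)*Z) := by
    have h3 : u^2*v^2 ≤ (X+R)^2*Y^2 :=
      mul_le_mul hu2 hv2 (sq_nonneg v) (by positivity)
    nlinarith
  calc e * |(-(2*γ*v^2) + -(2*γ*(u*w)) + 4*γ^2*(u^2*v^2))|
      ≤ 1 * |(-(2*γ*v^2) + -(2*γ*(u*w)) + 4*γ^2*(u^2*v^2))| :=
        mul_le_mul_of_nonneg_right he1 (abs_nonneg _)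
    _ = _ := one_mul _
    _ ≤ _ := htr.trans hfin



/-- **Second derivative bound for a next-layer pre-activation of a Kafnet.**
If each previous-layer pre-activation `g_h` is differentiable on a neighborhood
of `z` and twice differentiable at `z`, with `|g_h(z)| ≤ X`, `|g_h'(z)| ≤ Y`,
`|g_h''(z)| ≤ Z`, dictionary `|d_k| ≤ R`, mixing coefficients `|α_{hk}| ≤ α`,
and weights `|W_h| ≤ W`, then
`G(t) = Σ_h W_h (Σ_k α_{hk} exp(−γ(g_h(t)−d_k)²)) + b` is twice differentiable
at `z` with `|G''(z)| ≤ 2HWDαγ[(1 + 2γ(X+R)²)Y² + (X+R)Z]`. -/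
theorem kafnet_preactivation_second_deriv_bound (H D : ℕ)
    (g : Fin H → ℝ → ℝ) (z γ X Y Z R α W b : ℝ)
    (d : Fin D → ℝ) (αc : Fin H → Fin D → ℝ) (Wv : Fin H → ℝ)
    (hγ : 0 ≤ γ) (hX : 0 ≤ X) (hY : 0 ≤ Y) (hZ : 0 ≤ Z) (hR : 0 ≤ R)
    (hα : 0 ≤ α) (hW : 0 ≤ W)
    (hg : ∀ h, ∀ᶠ t in nhds z, DifferentiableAt ℝ (g h) t)
    (hg2 : ∀ h, DifferentiableAt ℝ (deriv (g h)) z)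
    (hgz : ∀ h, |g h z| ≤ X) (hg' : ∀ h, |deriv (g h) z| ≤ Y)
    (hg'' : ∀ h, |deriv (deriv (g h)) z| ≤ Z)
    (hd : ∀ k, |d k| ≤ R) (hαc : ∀ h k, |αc h k| ≤ α) (hWv : ∀ h, |Wv h| ≤ W) :
    (∀ᶠ t in nhds z, DifferentiableAt ℝ
        (fun t => (∑ h : Fin H, Wv h *
          ∑ k : Fin D, αc h k * Real.exp (-γ * (g h t - d k) ^ 2)) + b) t) ∧
      DifferentiableAt ℝ
        (deriv (fun t => (∑ h : Fin H, Wv h *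
          ∑ k : Fin D, αc h k * Real.exp (-γ * (g h t - d k) ^ 2)) + b)) z ∧
      |deriv (deriv (fun t => (∑ h : Fin H, Wv h *
          ∑ k : Fin D, αc h k * Real.exp (-γ * (g h t - d k) ^ 2)) + b)) z| ≤
        2 * H * W * D * α * γ * ((1 + 2 * γ * (X + R) ^ 2) * Y ^ 2 + (X + R) * Z) := by
  have hXR : 0 ≤ X + R := by linarith
  have hgall : ∀ᶠ t in nhds z, ∀ h, DifferentiableAt ℝ (g h) t := Filter.eventually_all.2 hg
  have hgz' : ∀ h, HasDerivAt (g h) (deriv (g h) z) z :=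
    fun h => ((hg h).self_of_nhds).hasDerivAt
  have hg2' : ∀ h, HasDerivAt (deriv (g h)) (deriv (deriv (g h)) z) z :=
    fun h => (hg2 h).hasDerivAt
  have key : ∀ t, (∀ h, DifferentiableAt ℝ (g h) t) →
      HasDerivAt (fun t => (∑ h : Fin H, Wv h *
          ∑ k : Fin D, αc h k * Real.exp (-γ * (g h t - d k) ^ 2)) + b)
        (∑ h : Fin H, Wv h * ∑ k : Fin D, αc h k *
          ((-2 * γ * (g h t - d k) * deriv (g h) t) *
            Real.exp (-γ * (g h t - d k) ^ 2))) t := by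
    intro t ht
    exact (HasDerivAt.fun_sum (fun h _ =>
      (HasDerivAt.fun_sum (fun k _ =>
        (kaf_hasDerivAt γ (d k) (g h) (deriv (g h) t) t (ht h).hasDerivAt).const_mul
          (αc h k))).const_mul (Wv h))).add_const b
  have hDiff : ∀ᶠ t in nhds z, DifferentiableAt ℝ
      (fun t => (∑ h : Fin H, Wv h *
        ∑ k : Fin D, αc h k * Real.exp (-γ * (g h t - d k) ^ 2)) + b) t :=
    hgall.mono fun t ht => (key t ht).differentiableAt
  have hderivF : deriv (fun t => (∑ h : Fin H, Wv h *
        ∑ k : Fin D, αc h k * Real.exp (-γ * (g h t - d k) ^ 2)) + b) =ᶠ[nhds z]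
      (fun t => ∑ h : Fin H, Wv h * ∑ k : Fin D, αc h k *
        ((-2 * γ * (g h t - d k) * deriv (g h) t) *
          Real.exp (-γ * (g h t - d k) ^ 2))) :=
    hgall.mono fun t ht => (key t ht).deriv
  have key2 : ∀ h k, HasDerivAt
      (fun t => (-2 * γ * (g h t - d k) * deriv (g h) t) *
        Real.exp (-γ * (g h t - d k) ^ 2))
      (((-2*γ*(deriv (g h) z))*(deriv (g h) z) +
          (-2*γ*(g h z - d k))*(deriv (deriv (g h)) z)) *
          Real.exp (-γ * (g h z - d k) ^ 2) +
        ((-2*γ*(g h z - d k))*(deriv (g h) z)) *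
          ((-2*γ*(g h z - d k)*(deriv (g h) z)) *
            Real.exp (-γ * (g h z - d k) ^ 2))) z := by
    intro h k
    have hP : HasDerivAt (fun t => -2 * γ * (g h t - d k) * deriv (g h) t)
        ((-2*γ*(deriv (g h) z))*(deriv (g h) z) +
          (-2*γ*(g h z - d k))*(deriv (deriv (g h)) z)) z := by
      have h1 := (((hgz' h).sub_const (d k)).const_mul (-2*γ)).fun_mul (hg2' h)
      convert h1 using 1
    have hC := kaf_hasDerivAt γ (d k) (g h) (deriv (g h) z) z (hgz' h)
    have h2 := hP.fun_mul hC
    convert h2 using 1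
  have keyF1 : HasDerivAt (fun t => ∑ h : Fin H, Wv h * ∑ k : Fin D, αc h k *
        ((-2 * γ * (g h t - d k) * deriv (g h) t) *
          Real.exp (-γ * (g h t - d k) ^ 2)))
      (∑ h : Fin H, Wv h * ∑ k : Fin D, αc h k *
        (((-2*γ*(deriv (g h) z))*(deriv (g h) z) +
            (-2*γ*(g h z - d k))*(deriv (deriv (g h)) z)) *
            Real.exp (-γ * (g h z - d k) ^ 2) +
          ((-2*γ*(g h z - d k))*(deriv (g h) z)) *
            ((-2*γ*(g h z - d k)*(deriv (g h) z)) *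
              Real.exp (-γ * (g h z - d k) ^ 2)))) z :=
    HasDerivAt.fun_sum (fun h _ =>
      (HasDerivAt.fun_sum (fun k _ => (key2 h k).const_mul (αc h k))).const_mul (Wv h))
  refine ⟨hDiff, keyF1.differentiableAt.congr_of_eventuallyEq hderivF, ?_⟩
  have hd2 : deriv (deriv (fun t => (∑ h : Fin H, Wv h *
      ∑ k : Fin D, αc h k * Real.exp (-γ * (g h t - d k) ^ 2)) + b)) z =
      ∑ h : Fin H, Wv h * ∑ k : Fin D, αc h k *
        (((-2*γ*(deriv (g h) z))*(deriv (g h) z) +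
            (-2*γ*(g h z - d k))*(deriv (deriv (g h)) z)) *
            Real.exp (-γ * (g h z - d k) ^ 2) +
          ((-2*γ*(g h z - d k))*(deriv (g h) z)) *
            ((-2*γ*(g h z - d k)*(deriv (g h) z)) *
              Real.exp (-γ * (g h z - d k) ^ 2))) := by
    rw [hderivF.deriv_eq]
    exact keyF1.deriv
  rw [hd2]
  have hterm : ∀ h k, |(((-2*γ*(deriv (g h) z))*(deriv (g h) z) +
          (-2*γ*(g h z - d k))*(deriv (deriv (g h)) z)) *
          Real.exp (-γ * (g h z - d k) ^ 2) +
        ((-2*γ*(g h z - d k))*(deriv (g h) z)) *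
          ((-2*γ*(g h z - d k)*(deriv (g h) z)) *
            Real.exp (-γ * (g h z - d k) ^ 2)))| ≤
      2*γ*((1+2*γ*(X+R)^2)*Y^2 + (X+R)*Z) := by
    intro h k
    have hu : |g h z - d k| ≤ X + R := by
      rw [sub_eq_add_neg]
      exact (abs_add_le _ _).trans (by rw [abs_neg]; exact add_le_add (hgz h) (hd k))
    have he0 : (0:ℝ) ≤ Real.exp (-γ * (g h z - d k) ^ 2) := (Real.exp_pos _).le
    have he1 : Real.exp (-γ * (g h z - d k) ^ 2) ≤ 1 := by
      rw [Real.exp_le_one_iff]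
      nlinarith [sq_nonneg (g h z - d k)]
    exact bound_aux γ (g h z - d k) (deriv (g h) z) (deriv (deriv (g h)) z)
      (Real.exp (-γ * (g h z - d k) ^ 2)) X Y Z R hγ hXR hu (hg' h) (hg'' h) he0 he1
  have hB0 : (0:ℝ) ≤ 2*γ*((1+2*γ*(X+R)^2)*Y^2 + (X+R)*Z) := by positivity
  have hinner : ∀ h, |∑ k : Fin D, αc h k *
      (((-2*γ*(deriv (g h) z))*(deriv (g h) z) +
          (-2*γ*(g h z - d k))*(deriv (deriv (g h)) z)) *
          Real.exp (-γ * (g h z - d k) ^ 2) +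
        ((-2*γ*(g h z - d k))*(deriv (g h) z)) *
          ((-2*γ*(g h z - d k)*(deriv (g h) z)) *
            Real.exp (-γ * (g h z - d k) ^ 2)))| ≤
      D * (α * (2*γ*((1+2*γ*(X+R)^2)*Y^2 + (X+R)*Z))) := by
    intro h
    calc |∑ k : Fin D, _| ≤ ∑ k : Fin D, |αc h k *
        (((-2*γ*(deriv (g h) z))*(deriv (g h) z) +
            (-2*γ*(g h z - d k))*(deriv (deriv (g h)) z)) *
            Real.exp (-γ * (g h z - d k) ^ 2) +
          ((-2*γ*(g h z - d k))*(deriv (g h) z)) *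
            ((-2*γ*(g h z - d k)*(deriv (g h) z)) *
              Real.exp (-γ * (g h z - d k) ^ 2)))| := Finset.abs_sum_le_sum_abs _ _
      _ ≤ ∑ _k : Fin D, α * (2*γ*((1+2*γ*(X+R)^2)*Y^2 + (X+R)*Z)) :=
        Finset.sum_le_sum fun k _ => by
          rw [abs_mul]
          exact mul_le_mul (hαc h k) (hterm h k) (abs_nonneg _) hα
      _ = D * (α * (2*γ*((1+2*γ*(X+R)^2)*Y^2 + (X+R)*Z))) := by
        simp [Finset.sum_const, Finset.card_univ, nsmul_eq_mul]
  calc |∑ h : Fin H, Wv h * ∑ k : Fin D, αc h k *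
        (((-2*γ*(deriv (g h) z))*(deriv (g h) z) +
            (-2*γ*(g h z - d k))*(deriv (deriv (g h)) z)) *
            Real.exp (-γ * (g h z - d k) ^ 2) +
          ((-2*γ*(g h z - d k))*(deriv (g h) z)) *
            ((-2*γ*(g h z - d k)*(deriv (g h) z)) *
              Real.exp (-γ * (g h z - d k) ^ 2)))|
      ≤ ∑ h : Fin H, |Wv h * ∑ k : Fin D, αc h k *
        (((-2*γ*(deriv (g h) z))*(deriv (g h) z) +
            (-2*γ*(g h z - d k))*(deriv (deriv (g h)) z)) *
            Real.exp (-γ * (g h z - d k) ^ 2) +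
          ((-2*γ*(g h z - d k))*(deriv (g h) z)) *
            ((-2*γ*(g h z - d k)*(deriv (g h) z)) *
              Real.exp (-γ * (g h z - d k) ^ 2)))| := Finset.abs_sum_le_sum_abs _ _
    _ ≤ ∑ _h : Fin H, W * (D * (α * (2*γ*((1+2*γ*(X+R)^2)*Y^2 + (X+R)*Z)))) :=
        Finset.sum_le_sum fun h _ => by
          rw [abs_mul]
          refine mul_le_mul (hWv h) (hinner h) (abs_nonneg _) hW
    _ = H * (W * (D * (α * (2*γ*((1+2*γ*(X+R)^2)*Y^2 + (X+R)*Z))))) := by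
        simp [Finset.sum_const, Finset.card_univ, nsmul_eq_mul]
    _ = 2 * H * W * D * α * γ * ((1 + 2 * γ * (X + R) ^ 2) * Y ^ 2 + (X + R) * Z) := by
        ring
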